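/- arXiv:1206.0350 — 2 statements merged into one kernel-verified Lean document; each statement's English description precedes it below -/
import Mathlib

section
/- (Decay of the integrand underlying Theorem 3.) Suppose p ≥ 1, z is a nonzero complex number, and either μ < 0, or μ = 0 and |z| > v. Let t₀ be a fixed real number such that for every real σ none of the numbers b_j − β_j(σ+it₀) (1 ≤ j ≤ m), 1 − a_j + α_j(σ+it₀) (1 ≤ j ≤ n), 1 − b_j + β_j(σ+it₀) (m+1 ≤ j ≤ q), a_j − α_j(σ+it₀) (n+1 ≤ j ≤ p) is a nonpositive integer. Then |φ(σ + it₀)·z^{σ+it₀}| → 0 as σ → −∞. -/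
open Complex Finset Filter MeasureTheory Real

/-- The kernel `φ(s)` of the Mellin–Barnes integral defining the I-function. -/
noncomputable def phi (p q m n : ℕ) (α A : Fin p → ℝ) (a : Fin p → ℂ)
    (β B : Fin q → ℝ) (b : Fin q → ℂ) (s : ℂ) : ℂ :=
  ((∏ j ∈ univ.filter (fun j : Fin q => (j : ℕ) < m),
      Complex.Gamma (b j - (β j : ℂ) * s) ^ (B j : ℂ)) *
   (∏ j ∈ univ.filter (fun j : Fin p => (j : ℕ) < n),
      Complex.Gamma (1 - a j + (α j : ℂ) * s) ^ (A j : ℂ))) /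
  ((∏ j ∈ univ.filter (fun j : Fin q => m ≤ (j : ℕ)),
      Complex.Gamma (1 - b j + (β j : ℂ) * s) ^ (B j : ℂ)) *
   (∏ j ∈ univ.filter (fun j : Fin p => n ≤ (j : ℕ)),
      Complex.Gamma (a j - (α j : ℂ) * s) ^ (A j : ℂ)))

/-- `σ` is admissible: no Gamma argument in `φ(σ + it)` is a nonpositive integer. -/
def Admissible (p q m n : ℕ) (α : Fin p → ℝ) (a : Fin p → ℂ)
    (β : Fin q → ℝ) (b : Fin q → ℂ) (σ : ℝ) : Prop :=
  ∀ t : ℝ, ∀ k : ℕ,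
    (∀ j : Fin q, (j : ℕ) < m → b j - (β j : ℂ) * ((σ : ℂ) + t * Complex.I) ≠ -(k : ℂ)) ∧
    (∀ j : Fin p, (j : ℕ) < n → 1 - a j + (α j : ℂ) * ((σ : ℂ) + t * Complex.I) ≠ -(k : ℂ)) ∧
    (∀ j : Fin q, m ≤ (j : ℕ) → 1 - b j + (β j : ℂ) * ((σ : ℂ) + t * Complex.I) ≠ -(k : ℂ)) ∧
    (∀ j : Fin p, n ≤ (j : ℕ) → a j - (α j : ℂ) * ((σ : ℂ) + t * Complex.I) ≠ -(k : ℂ))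

noncomputable def Delta (p q m n : ℕ) (α A : Fin p → ℝ) (β B : Fin q → ℝ) : ℝ :=
  (∑ j ∈ univ.filter (fun j : Fin q => (j : ℕ) < m), B j * β j)
  - (∑ j ∈ univ.filter (fun j : Fin q => m ≤ (j : ℕ)), B j * β j)
  + (∑ j ∈ univ.filter (fun j : Fin p => (j : ℕ) < n), A j * α j)
  - (∑ j ∈ univ.filter (fun j : Fin p => n ≤ (j : ℕ)), A j * α j)

noncomputable def mu (p q : ℕ) (α A : Fin p → ℝ) (β B : Fin q → ℝ) : ℝ :=
  (∑ j, B j * β j) - (∑ j, A j * α j)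

noncomputable def nabla (p q : ℕ) (A : Fin p → ℝ) (a : Fin p → ℂ)
    (B : Fin q → ℝ) (b : Fin q → ℂ) : ℝ :=
  (∑ j, A j * ((a j).re - 1/2)) - (∑ j, B j * ((b j).re - 1/2))

noncomputable def vconst (p q : ℕ) (α A : Fin p → ℝ) (β B : Fin q → ℝ) : ℝ :=
  (∏ j, (β j) ^ (B j * β j)) / (∏ j, (α j) ^ (A j * α j))

open Nat Topology

lemma aux_abs_cpow_real (w : ℂ) (r : ℝ) (hr : r ≠ 0) :
    ‖w ^ (r:ℂ)‖ = ‖w‖ ^ r := by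
  rcases eq_or_ne w 0 with h | h
  · rw [h, Complex.zero_cpow (Complex.ofReal_ne_zero.mpr hr), norm_zero, Real.zero_rpow hr]
  · rw [Complex.norm_cpow_of_ne_zero h]
    simp

lemma aux_log_factorial_le (n : ℕ) : Real.log (n !) ≤ (n+1) * Real.log (n+1) - n := by
  induction n with
  | zero => simp
  | succ n ih =>
    have hn1 : (0:ℝ) < n + 1 := by positivity
    have hn2 : (0:ℝ) < n + 2 := by positivity
    have h' : 1/((n:ℝ)+2) ≤ Real.log (n+2) - Real.log (n+1) := by
      have h := Real.log_le_sub_one_of_pos (x := ((n:ℝ)+1)/((n:ℝ)+2)) (by positivity)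
      rw [Real.log_div (by positivity) (by positivity)] at h
      have h2 : ((n:ℝ)+1)/((n:ℝ)+2) - 1 = -(1/((n:ℝ)+2)) := by
        field_simp
        norm_num
      linarith
    have key : 1 + ((n:ℝ)+2) * Real.log (n+1) ≤ ((n:ℝ)+2) * Real.log (n+2) := by
      have := mul_le_mul_of_nonneg_left h' (le_of_lt hn2)
      rw [mul_one_div, div_self hn2.ne'] at this
      nlinarith
    have hfact : ((n+1)! : ℝ) = (n+1) * (n !) := by
      rw [Nat.factorial_succ]; push_cast; ring
    rw [hfact, Real.log_mul (by positivity) (by positivity)]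
    push_cast
    push_cast at ih
    have hcast : ((n:ℝ)+1+1) = (n:ℝ)+2 := by ring
    rw [hcast]
    nlinarith

lemma aux_le_log_factorial (n : ℕ) : (n:ℝ) * Real.log n - n ≤ Real.log (n !) := by
  induction n with
  | zero => simp
  | succ n ih =>
    have hfact : ((n+1)! : ℝ) = (n+1) * (n !) := by
      rw [Nat.factorial_succ]; push_cast; ring
    rw [hfact, Real.log_mul (by positivity) (by positivity)]
    push_cast
    rcases Nat.eq_zero_or_pos n with h0 | h0
    · subst h0; simp
    have hn : (1:ℝ) ≤ n := by exact_mod_cast h0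
    have hn0 : (0:ℝ) < n := by linarith
    -- need : (n+1) log (n+1) - (n+1) ≤ log(n+1) + log n!
    -- suffices n log(n+1) - n log n ≤ 1
    have h' : Real.log (n+1) - Real.log n ≤ 1/(n:ℝ) := by
      have h := Real.log_le_sub_one_of_pos (x := ((n:ℝ)+1)/(n:ℝ)) (by positivity)
      rw [Real.log_div (by positivity) (by positivity)] at h
      have h2 : ((n:ℝ)+1)/(n:ℝ) - 1 = 1/(n:ℝ) := by field_simp; ring
      linarith
    have key : (n:ℝ) * Real.log (n+1) - (n:ℝ) * Real.log n ≤ 1 := by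
      have := mul_le_mul_of_nonneg_left h' (le_of_lt hn0)
      rw [mul_one_div, div_self hn0.ne'] at this
      nlinarith
    push_cast at ih
    nlinarith

/-- monotonicity of `x ↦ x log x - x` on `[1, ∞)` -/
lemma aux_mono_xlogx {s t : ℝ} (hs : 1 ≤ s) (hst : s ≤ t) :
    s * Real.log s - s ≤ t * Real.log t - t := by
  have hs0 : (0:ℝ) < s := by linarith
  have ht0 : (0:ℝ) < t := by linarith
  -- log t - log s ≥ 1 - s/t ;  log t ≥ 1 - 1/t
  have h1 : 1 - s/t ≤ Real.log t - Real.log s := by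
    have h := Real.log_le_sub_one_of_pos (x := s/t) (by positivity)
    rw [Real.log_div hs0.ne' ht0.ne'] at h
    linarith
  have h2 : 1 - 1/t ≤ Real.log t := by
    have h := Real.log_le_sub_one_of_pos (x := 1/t) (by positivity)
    rw [Real.log_div one_ne_zero ht0.ne', Real.log_one] at h
    linarith
  -- t log t - s log s - (t - s) ≥ s(log t - log s) + (t-s)(log t - 1)
  --   ≥ s(1 - s/t) + (t-s)(-1/t) = (s t - s² - t + s)/t = (t-s)(s-1)/t ≥ 0
  have hlog : Real.log s ≤ Real.log t := Real.log_le_log hs0 hst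
  have e1 : s * (1 - s/t) = s - s^2/t := by ring
  have e2 : 0 ≤ (t - s) * (s - 1) / t := div_nonneg (mul_nonneg (by linarith) (by linarith)) (le_of_lt ht0)
  have key : s * (Real.log t - Real.log s) ≥ s - s^2/t := by nlinarith
  have key2 : (t - s) * (Real.log t - 1) ≥ (t-s) * (-(1/t)) := by nlinarith
  have expand : (t - s) * (s - 1) / t = (s - s^2/t) + (t-s)*(-(1/t)) - (t - s) + (t-s) := by
    field_simp; ring
  nlinarith

/-- `|Γ(x+iτ)| ≤ Γ(x)` for `x > 0`. -/
lemma aux_abs_Gamma_le (x τ : ℝ) (hx : 0 < x) :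
    ‖Complex.Gamma ((x:ℂ) + τ * Complex.I)‖ ≤ Real.Gamma x := by
  have hre : ((x:ℂ) + τ * Complex.I).re = x := by simp
  rw [Complex.Gamma_eq_integral (by rw [hre]; exact hx),
    Real.Gamma_eq_integral hx]
  calc ‖∫ t : ℝ in Set.Ioi 0, (Real.exp (-t)) * (t:ℂ) ^ ((x:ℂ) + τ*Complex.I - 1)‖
      ≤ ∫ t : ℝ in Set.Ioi 0, ‖(Real.exp (-t) : ℂ) * (t:ℂ) ^ ((x:ℂ) + τ*Complex.I - 1)‖ :=
        norm_integral_le_integral_norm _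
    _ = ∫ t : ℝ in Set.Ioi 0, Real.exp (-t) * t ^ (x - 1) := by
        apply MeasureTheory.setIntegral_congr_fun measurableSet_Ioi
        intro t ht
        simp only [norm_mul]
        rw [Complex.norm_of_nonneg (Real.exp_pos _).le,
          Complex.norm_cpow_eq_rpow_re_of_pos ht]
        congr 1
        simp

lemma aux_Gamma_le (x : ℝ) (hx : 2 ≤ x) :
    Real.Gamma x ≤ Real.exp (x * Real.log x - x + Real.log x + 3) := by
  have hx0 : (0:ℝ) < x := by linarith
  set n : ℕ := ⌊x⌋₊ with hn
  have hn2 : 2 ≤ n := Nat.le_floor (by exact_mod_cast hx)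
  have hnx : (n:ℝ) ≤ x := Nat.floor_le (le_of_lt hx0)
  have hxn : x < n + 1 := Nat.lt_floor_add_one x
  have hn0 : (0:ℝ) < n := by positivity
  -- convexity: Γ(x) ≤ max Γ(n) Γ(n+1) = n!
  have hmem : x ∈ segment ℝ ((n:ℝ)) ((n:ℝ)+1) := by
    rw [segment_eq_Icc (by linarith)]
    exact ⟨hnx, by linarith⟩
  have hconv := Real.convexOn_Gamma.le_on_segment
    (x := (n:ℝ)) (y := (n:ℝ)+1) (Set.mem_Ioi.mpr hn0) (Set.mem_Ioi.mpr (by linarith)) hmem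
  have hGn : Real.Gamma ((n:ℝ)) = (n-1)! := by
    have : ((n:ℝ)) = ((n-1 : ℕ) : ℝ) + 1 := by
      have : n - 1 + 1 = n := Nat.succ_pred_eq_of_pos (lt_of_lt_of_le (by norm_num) hn2)
      rw [← this]; push_cast; ring
    rw [this, Real.Gamma_nat_eq_factorial]
  have hGn1 : Real.Gamma ((n:ℝ)+1) = n ! := by
    rw [show ((n:ℝ)+1) = ((n:ℕ):ℝ)+1 by norm_num, Real.Gamma_nat_eq_factorial]
  have hfle : ((n-1)! : ℝ) ≤ (n ! : ℝ) := by
    exact_mod_cast Nat.factorial_le (by omega)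
  have hmax : Real.Gamma x ≤ (n ! : ℝ) := by
    rw [hGn, hGn1] at hconv
    calc Real.Gamma x ≤ max ((n-1)! : ℝ) ((n !) : ℝ) := hconv
      _ = (n ! : ℝ) := max_eq_right hfle
  -- now log bounds
  have hfactpos : (0:ℝ) < (n ! : ℝ) := by positivity
  have hlog1 : Real.log (n !) ≤ (n+1) * Real.log (n+1) - n := aux_log_factorial_le n
  have hmono : ((n:ℝ)+1) * Real.log ((n:ℝ)+1) ≤ (x+1) * Real.log (x+1) := by
    have h1 : Real.log ((n:ℝ)+1) ≤ Real.log (x+1) := Real.log_le_log (by linarith) (by linarith)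
    have h2 : (0:ℝ) ≤ Real.log ((n:ℝ)+1) := Real.log_nonneg (by linarith)
    nlinarith
  have hlogx1 : Real.log (x+1) ≤ Real.log x + 1/x := by
    have h := Real.log_le_sub_one_of_pos (x := (x+1)/x) (by positivity)
    rw [Real.log_div (by positivity) hx0.ne'] at h
    have : (x+1)/x - 1 = 1/x := by field_simp; ring
    linarith
  have hfin : (x+1) * Real.log (x+1) ≤ x * Real.log x + Real.log x + 2 := by
    have hl0 : 0 ≤ Real.log x := Real.log_nonneg (by linarith)
    have : (x+1) * Real.log (x+1) ≤ (x+1) * (Real.log x + 1/x) :=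
      mul_le_mul_of_nonneg_left hlogx1 (by linarith)
    have hq : (x+1) * (1/x) ≤ 2 := by
      rw [mul_one_div, div_le_iff₀ hx0]
      nlinarith
    nlinarith
  calc Real.Gamma x ≤ (n ! : ℝ) := hmax
    _ = Real.exp (Real.log (n !)) := (Real.exp_log hfactpos).symm
    _ ≤ Real.exp (x * Real.log x - x + Real.log x + 3) := by
        apply Real.exp_le_exp.mpr
        -- log n! ≤ (n+1)log(n+1) - n ≤ (x+1)log(x+1) - (x-1) ≤ x log x + log x + 2 - x + 1
        have hnx' : x - 1 ≤ (n:ℝ) := by linarith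
        linarith

lemma aux_Gamma_shift (τ : ℝ) (N : ℕ) (y : ℝ) (hy : 0 < y) :
    ‖Complex.Gamma ((y:ℂ) + τ*Complex.I + N)‖ =
      ‖Complex.Gamma ((y:ℂ) + τ*Complex.I)‖ *
        ∏ k ∈ Finset.range N, ‖(y:ℂ) + τ*Complex.I + k‖ := by
  induction N with
  | zero => simp
  | succ N ih =>
    have hne : (y:ℂ) + τ*Complex.I + N ≠ 0 := by
      intro h
      have : ((y:ℂ) + τ*Complex.I + N).re = 0 := by rw [h]; simp
      simp only [Complex.add_re, Complex.ofReal_re, Complex.natCast_re, Complex.mul_re,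
        Complex.I_re, Complex.I_im, Complex.ofReal_im] at this
      have hN : (0:ℝ) ≤ N := Nat.cast_nonneg N
      nlinarith
    have : ((y:ℂ) + τ*Complex.I + (N+1:ℕ)) = ((y:ℂ) + τ*Complex.I + N) + 1 := by
      push_cast; ring
    rw [this, Complex.Gamma_add_one _ hne, norm_mul, ih, Finset.prod_range_succ]
    ring

lemma aux_Gamma_lower (τ : ℝ) : ∃ c : ℝ, 0 < c ∧ ∀ x : ℝ, 4 ≤ x →
    c * Real.exp (x * Real.log x - x - 2 * Real.log x - 2) ≤
      ‖Complex.Gamma ((x:ℂ) + τ*Complex.I)‖ := by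
  -- minimum of |Γ| on the segment [2,3] + iτ
  have hcont : ContinuousOn (fun t : ℝ => ‖Complex.Gamma ((t:ℂ) + τ*Complex.I)‖)
      (Set.Icc 2 3) := by
    intro t ht
    apply ContinuousAt.continuousWithinAt
    have hne : ∀ k : ℕ, (t:ℂ) + τ*Complex.I ≠ -k := by
      intro k h
      have : ((t:ℂ) + τ*Complex.I).re = (-(k:ℂ)).re := by rw [h]
      simp only [Complex.add_re, Complex.ofReal_re, Complex.mul_re, Complex.I_re, Complex.I_im,
        Complex.ofReal_im, Complex.neg_re, Complex.natCast_re] at this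
      have hk : (0:ℝ) ≤ k := Nat.cast_nonneg k
      have ht2 : (2:ℝ) ≤ t := ht.1
      nlinarith
    have h1 : ContinuousAt (fun t : ℝ => (t:ℂ) + τ*Complex.I) t := by fun_prop
    have h2 : ContinuousAt Complex.Gamma ((t:ℂ) + τ*Complex.I) :=
      (Complex.differentiableAt_Gamma _ hne).continuousAt
    exact continuous_norm.continuousAt.comp (ContinuousAt.comp h2 h1)
  obtain ⟨t₀, ht₀mem, ht₀min'⟩ := isCompact_Icc.exists_isMinOn
    (Set.nonempty_Icc.mpr (by norm_num : (2:ℝ) ≤ 3)) hcont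
  have ht₀min : ∀ t ∈ Set.Icc (2:ℝ) 3,
      ‖Complex.Gamma ((t₀:ℂ) + τ*Complex.I)‖ ≤
        ‖Complex.Gamma ((t:ℂ) + τ*Complex.I)‖ := fun t ht => ht₀min' ht
  set c := ‖Complex.Gamma ((t₀:ℂ) + τ*Complex.I)‖ with hc
  have hcpos : 0 < c := by
    rw [hc]
    apply norm_pos_iff.mpr
    apply Complex.Gamma_ne_zero_of_re_pos
    simp only [Complex.add_re, Complex.ofReal_re, Complex.mul_re, Complex.I_re, Complex.I_im,
      Complex.ofReal_im]
    have := ht₀mem.1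
    nlinarith
  refine ⟨c, hcpos, fun x hx => ?_⟩
  set N : ℕ := ⌊x⌋₊ - 2 with hN
  have hfl2 : 4 ≤ ⌊x⌋₊ := Nat.le_floor (by exact_mod_cast hx)
  have hflx : (⌊x⌋₊ : ℝ) ≤ x := Nat.floor_le (by linarith)
  have hxfl : x < ⌊x⌋₊ + 1 := Nat.lt_floor_add_one x
  have hNx : (N:ℝ) = (⌊x⌋₊ : ℝ) - 2 := by
    rw [hN]; push_cast [Nat.cast_sub (by omega : 2 ≤ ⌊x⌋₊)]; ring
  set y : ℝ := x - N with hy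
  have hy2 : 2 ≤ y := by rw [hy, hNx]; linarith
  have hy3 : y ≤ 3 := by rw [hy, hNx]; linarith
  have hsplit : (x:ℂ) + τ*Complex.I = ((y:ℂ) + τ*Complex.I) + N := by
    rw [hy]; push_cast; ring
  rw [hsplit, aux_Gamma_shift τ N y (by linarith)]
  -- lower-bound the product by (N+1)!
  have hprod : ((N+1)! : ℝ) ≤ ∏ k ∈ Finset.range N, ‖(y:ℂ) + τ*Complex.I + k‖ := by
    have h1 : ∀ k ∈ Finset.range N, ((k:ℝ) + 2) ≤ ‖(y:ℂ) + τ*Complex.I + k‖ := by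
      intro k _
      have hre : (((y:ℂ) + τ*Complex.I + k)).re = y + k := by simp
      calc ((k:ℝ) + 2) ≤ y + k := by linarith
        _ = (((y:ℂ) + τ*Complex.I + k)).re := hre.symm
        _ ≤ ‖(y:ℂ) + τ*Complex.I + k‖ := Complex.re_le_norm _
    have hnat : ∏ k ∈ Finset.range N, (k+2) = (N+1)! := by
      rw [← Finset.prod_range_add_one_eq_factorial (N+1), Finset.prod_range_succ']
      rw [Nat.mul_comm, Nat.zero_add, Nat.one_mul]
    calc ((N+1)! : ℝ) = ∏ k ∈ Finset.range N, ((k:ℝ) + 2) := by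
          rw [← hnat]; push_cast; rfl
      _ ≤ _ := Finset.prod_le_prod (fun k _ => by positivity) h1
  -- and (N+1)! ≥ exp (x log x - x - 2 log x - 2)
  have hfge : Real.exp (x * Real.log x - x - 2 * Real.log x - 2) ≤ ((N+1)! : ℝ) := by
    have h1 : ((N:ℝ)+1) * Real.log ((N:ℝ)+1) - ((N:ℝ)+1) ≤ Real.log ((N+1)!) := by
      have := aux_le_log_factorial (N+1); push_cast at this ⊢; convert this using 3 <;> norm_num
    have hN1 : x - 2 ≤ (N:ℝ) + 1 := by rw [hNx]; linarith
    have h2 : (x-2) * Real.log (x-2) - (x-2) ≤ ((N:ℝ)+1) * Real.log ((N:ℝ)+1) - ((N:ℝ)+1) :=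
      aux_mono_xlogx (by linarith) hN1
    have hx0 : (0:ℝ) < x := by linarith
    have hlx : 0 ≤ Real.log x := Real.log_nonneg (by linarith)
    have h3 : Real.log x - 4/x ≤ Real.log (x-2) := by
      have hx2 : x - 2 ≠ 0 := by linarith
      have h := Real.log_le_sub_one_of_pos (x := x/(x-2)) (div_pos hx0 (by linarith))
      rw [Real.log_div hx0.ne' hx2] at h
      have e1 : x/(x-2) - 1 = 2/(x-2) := by
        field_simp
        ring
      have e2 : 2/(x-2) ≤ 4/x := by
        rw [div_le_div_iff₀ (by linarith) hx0]; linarith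
      linarith
    have h4 : x * Real.log x - x - 2 * Real.log x - 2 ≤ (x-2) * Real.log (x-2) - (x-2) := by
      have h5 : (x-2) * (Real.log x - 4/x) ≤ (x-2) * Real.log (x-2) :=
        mul_le_mul_of_nonneg_left h3 (by linarith)
      have h6 : (x-2) * (Real.log x - 4/x) = x * Real.log x - 2 * Real.log x - 4 + 8/x := by
        field_simp; ring
      have h7 : 0 < 8/x := by positivity
      nlinarith
    calc Real.exp (x * Real.log x - x - 2 * Real.log x - 2)
        ≤ Real.exp (Real.log ((N+1)!)) := Real.exp_le_exp.mpr (by linarith)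
      _ = ((N+1)! : ℝ) := Real.exp_log (by positivity)
  calc c * Real.exp (x * Real.log x - x - 2 * Real.log x - 2)
      ≤ c * ((N+1)! : ℝ) := mul_le_mul_of_nonneg_left hfge (le_of_lt hcpos)
    _ ≤ ‖Complex.Gamma ((y:ℂ) + τ*Complex.I)‖ *
          ∏ k ∈ Finset.range N, ‖(y:ℂ) + τ*Complex.I + k‖ := by
        apply mul_le_mul (ht₀min y ⟨hy2, hy3⟩) hprod (by positivity)
        exact norm_nonneg _

lemma aux_sin_bounds (τ : ℝ) (hτ : τ ≠ 0) : ∃ cs Cs : ℝ, 0 < cs ∧ 0 < Cs ∧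
    ∀ x : ℝ, cs ≤ ‖Complex.sin ((Real.pi : ℂ) * ((x:ℂ) + τ*Complex.I))‖ ∧
      ‖Complex.sin ((Real.pi : ℂ) * ((x:ℂ) + τ*Complex.I))‖ ≤ Real.cosh (Real.pi * τ) := by
  refine ⟨|Real.sinh (Real.pi * τ)|, Real.cosh (Real.pi * τ), ?_, Real.cosh_pos _, ?_⟩
  · rw [abs_pos]
    intro h
    rw [Real.sinh_eq_zero] at h
    rcases mul_eq_zero.mp h with h' | h'
    · exact Real.pi_ne_zero h'
    · exact hτ h'
  intro x
  set z : ℂ := (Real.pi : ℂ) * ((x:ℂ) + τ*Complex.I) with hz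
  have hre : z.re = Real.pi * x := by simp [hz]
  have him : z.im = Real.pi * τ := by simp [hz]
  have hsin : Complex.sin z = (Real.sin z.re * Real.cosh z.im : ℝ) +
      (Real.cos z.re * Real.sinh z.im : ℝ) * Complex.I := by
    rw [Complex.sin_eq]
    push_cast
    norm_cast
  rw [hsin, Complex.norm_add_mul_I]
  set A := Real.sin z.re * Real.cosh z.im
  set B := Real.cos z.re * Real.sinh z.im
  have h1 : Real.sin z.re ^ 2 + Real.cos z.re ^ 2 = 1 := Real.sin_sq_add_cos_sq _
  have h2 : Real.sinh z.im ^ 2 ≤ Real.cosh z.im ^ 2 := by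
    have := Real.cosh_sq z.im
    nlinarith
  constructor
  · rw [← him]
    have hlow : Real.sinh z.im ^ 2 ≤ A^2 + B^2 := by
      simp only [A, B]
      nlinarith [sq_nonneg (Real.sin z.re), sq_nonneg (Real.sinh z.im)]
    calc |Real.sinh z.im| = Real.sqrt (Real.sinh z.im ^ 2) := (Real.sqrt_sq_eq_abs _).symm
      _ ≤ Real.sqrt (A^2 + B^2) := Real.sqrt_le_sqrt hlow
  · rw [← him]
    have hup : A^2 + B^2 ≤ Real.cosh z.im ^ 2 := by
      simp only [A, B]
      nlinarith [sq_nonneg (Real.cos z.re), sq_nonneg (Real.sinh z.im)]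
    calc Real.sqrt (A^2+B^2) ≤ Real.sqrt (Real.cosh z.im ^ 2) := Real.sqrt_le_sqrt hup
      _ = |Real.cosh z.im| := Real.sqrt_sq_eq_abs _
      _ = Real.cosh z.im := abs_of_pos (Real.cosh_pos _)

lemma aux_ratio_tendsto (r lam : ℝ) : Tendsto (fun u : ℝ => r/u + lam) atTop (𝓝 lam) := by
  have h : Tendsto (fun u : ℝ => r/u) atTop (𝓝 0) := by
    apply Tendsto.div_atTop tendsto_const_nhds tendsto_id
  simpa using h.add tendsto_const_nhds

lemma aux_logdiv_tendsto : Tendsto (fun u : ℝ => Real.log u / u) atTop (𝓝 0) :=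
  Real.isLittleO_log_id_atTop.tendsto_div_nhds_zero

lemma aux_inv_tendsto : Tendsto (fun u : ℝ => 1/u) atTop (𝓝 (0:ℝ)) := by
  simpa using tendsto_inv_atTop_zero

lemma aux_log_split (r lam : ℝ) (hlam : 0 < lam) :
    ∀ᶠ u : ℝ in atTop, Real.log (r + lam*u) = Real.log (r/u + lam) + Real.log u := by
  filter_upwards [eventually_ge_atTop (max 1 ((1 - r)/lam))] with u hu
  have hu1 : (1:ℝ) ≤ u := le_trans (le_max_left _ _) hu
  have hu0 : (0:ℝ) < u := by linarith
  have hx1 : 1 ≤ r + lam*u := by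
    have := le_trans (le_max_right _ _) hu
    have := mul_le_mul_of_nonneg_left this (le_of_lt hlam)
    rw [mul_div_cancel₀ _ hlam.ne'] at this
    linarith
  have hq : 0 < r/u + lam := by
    have : r/u + lam = (r + lam*u)/u := by field_simp
    rw [this]; positivity
  rw [← Real.log_mul hq.ne' hu0.ne']
  congr 1
  field_simp

lemma aux_lim_log (r lam : ℝ) (hlam : 0 < lam) :
    Tendsto (fun u : ℝ => Real.log (r + lam*u) / u) atTop (𝓝 0) := by
  have h1 : Tendsto (fun u : ℝ => Real.log (r/u + lam) * (1/u) + Real.log u / u)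
      atTop (𝓝 (Real.log lam * 0 + 0)) := by
    apply Tendsto.add
    · exact Tendsto.mul ((Real.continuousAt_log hlam.ne').tendsto.comp
        (aux_ratio_tendsto r lam)) aux_inv_tendsto
    · exact aux_logdiv_tendsto
  rw [mul_zero, add_zero] at h1
  apply h1.congr'
  filter_upwards [aux_log_split r lam hlam, eventually_gt_atTop 0] with u hs hu
  rw [hs]
  field_simp

lemma aux_lim_main (r lam : ℝ) (hlam : 0 < lam) :
    Tendsto (fun u : ℝ => ((r + lam*u) * Real.log (r + lam*u) - (r + lam*u)) / u
        - lam * Real.log u) atTop (𝓝 (lam * Real.log lam - lam)) := by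
  have hloglam : Tendsto (fun u : ℝ => Real.log (r/u + lam)) atTop (𝓝 (Real.log lam)) :=
    (Real.continuousAt_log hlam.ne').tendsto.comp (aux_ratio_tendsto r lam)
  have h1 : Tendsto (fun u : ℝ => (r/u + lam) * Real.log (r/u + lam)
      + r * (Real.log u / u) - (r/u + lam)) atTop
      (𝓝 (lam * Real.log lam + r * 0 - lam)) := by
    exact (((aux_ratio_tendsto r lam).mul hloglam).add
      (tendsto_const_nhds.mul aux_logdiv_tendsto)).sub (aux_ratio_tendsto r lam)
  rw [mul_zero, add_zero] at h1
  apply h1.congr'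
  filter_upwards [aux_log_split r lam hlam, eventually_gt_atTop 0] with u hs hu
  rw [hs]
  field_simp
  ring

lemma aux_plus_pack (r τ lam : ℝ) (hlam : 0 < lam) :
    ∃ E F : ℝ → ℝ,
      (∀ᶠ u : ℝ in atTop,
        Real.exp (F u) ≤ ‖Complex.Gamma (((r + lam*u : ℝ) : ℂ) + τ*Complex.I)‖ ∧
        ‖Complex.Gamma (((r + lam*u : ℝ) : ℂ) + τ*Complex.I)‖ ≤ Real.exp (E u)) ∧
      Tendsto (fun u => E u / u - lam * Real.log u) atTop (𝓝 (lam * Real.log lam - lam)) ∧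
      Tendsto (fun u => F u / u - lam * Real.log u) atTop (𝓝 (lam * Real.log lam - lam)) := by
  obtain ⟨c, hc, hlow⟩ := aux_Gamma_lower τ
  refine ⟨fun u => ((r + lam*u) * Real.log (r + lam*u) - (r + lam*u))
      + (Real.log (r + lam*u) + 3),
    fun u => ((r + lam*u) * Real.log (r + lam*u) - (r + lam*u))
      + ((-2) * Real.log (r + lam*u) + (Real.log c - 2)), ?_, ?_, ?_⟩
  · have hev : ∀ᶠ u : ℝ in atTop, 4 ≤ r + lam*u := by
      have := (tendsto_atTop_add_const_left _ r
        (tendsto_id.const_mul_atTop hlam)).eventually_ge_atTop 4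
      simpa using this
    filter_upwards [hev] with u hu
    set x := r + lam*u with hx
    constructor
    · have h := hlow x hu
      rw [← Real.exp_log hc, ← Real.exp_add] at h
      calc Real.exp _ ≤ _ := le_of_eq (by ring_nf)
        _ ≤ _ := h
    · calc ‖Complex.Gamma ((x:ℂ) + τ*Complex.I)‖
          ≤ Real.Gamma x := aux_abs_Gamma_le x τ (by linarith)
        _ ≤ Real.exp (x * Real.log x - x + Real.log x + 3) := aux_Gamma_le x (by linarith)
        _ = _ := by ring_nf
  · have h3 : Tendsto (fun u : ℝ => (3:ℝ)/u) atTop (𝓝 0) :=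
      Tendsto.div_atTop tendsto_const_nhds tendsto_id
    have h := (aux_lim_main r lam hlam).add ((aux_lim_log r lam hlam).add h3)
    rw [add_zero, add_zero] at h
    apply h.congr
    intro u
    ring
  · have h3 : Tendsto (fun u : ℝ => (Real.log c - 2)/u) atTop (𝓝 0) :=
      Tendsto.div_atTop tendsto_const_nhds tendsto_id
    have h2 : Tendsto (fun u : ℝ => (-2) * (Real.log (r + lam*u) / u)) atTop (𝓝 ((-2) * 0)) :=
      (aux_lim_log r lam hlam).const_mul _
    rw [mul_zero] at h2
    have h := (aux_lim_main r lam hlam).add (h2.add h3)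
    rw [add_zero, add_zero] at h
    apply h.congr
    intro u
    ring

lemma aux_minus_pack (r τ lam : ℝ) (hlam : 0 < lam) (hτ : τ ≠ 0) :
    ∃ E F : ℝ → ℝ,
      (∀ᶠ u : ℝ in atTop,
        Real.exp (F u) ≤ ‖Complex.Gamma (((r - lam*u : ℝ) : ℂ) + τ*Complex.I)‖ ∧
        ‖Complex.Gamma (((r - lam*u : ℝ) : ℂ) + τ*Complex.I)‖ ≤ Real.exp (E u)) ∧
      Tendsto (fun u => E u / u + lam * Real.log u) atTop (𝓝 (-(lam * Real.log lam - lam))) ∧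
      Tendsto (fun u => F u / u + lam * Real.log u) atTop (𝓝 (-(lam * Real.log lam - lam))) := by
  obtain ⟨Ep, Fp, hev, hEp, hFp⟩ := aux_plus_pack (1 - r) (-τ) lam hlam
  obtain ⟨cs, Cs, hcs, hCs, hsin⟩ := aux_sin_bounds τ hτ
  refine ⟨fun u => Real.log Real.pi - Real.log cs - Fp u,
    fun u => Real.log Real.pi - Real.log (Real.cosh (Real.pi * τ)) - Ep u, ?_, ?_, ?_⟩
  · have hev2 : ∀ᶠ u : ℝ in atTop, 0 < 1 - r + lam*u := by
      have := (tendsto_atTop_add_const_left _ (1-r)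
        (tendsto_id.const_mul_atTop hlam)).eventually_gt_atTop 0
      simpa using this
    filter_upwards [hev, hev2] with u hu hu2
    set w : ℂ := ((r - lam*u : ℝ) : ℂ) + τ*Complex.I with hw
    have h1w : (1:ℂ) - w = ((1 - r + lam*u : ℝ) : ℂ) + ((-τ : ℝ) : ℂ)*Complex.I := by
      rw [hw]; push_cast; ring
    have hG1w := hu
    rw [← h1w] at hG1w
    have hG1wpos : 0 < ‖Complex.Gamma (1 - w)‖ :=
      lt_of_lt_of_le (Real.exp_pos _) hG1w.1
    have hrefl := Complex.Gamma_mul_Gamma_one_sub w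
    have habs : ‖Complex.Gamma w‖ * ‖Complex.Gamma (1 - w)‖
        = Real.pi / ‖Complex.sin ((Real.pi:ℂ) * w)‖ := by
      rw [← norm_mul, hrefl, norm_div, Complex.norm_of_nonneg Real.pi_pos.le]
    have hsinw := hsin (r - lam*u)
    have hsinw1 : cs ≤ ‖Complex.sin ((Real.pi:ℂ) * w)‖ := hsinw.1
    have hsinw2 : ‖Complex.sin ((Real.pi:ℂ) * w)‖ ≤ Real.cosh (Real.pi * τ) :=
      hsinw.2
    have hsinpos : 0 < ‖Complex.sin ((Real.pi:ℂ) * w)‖ := lt_of_lt_of_le hcs hsinw1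
    have hGw : ‖Complex.Gamma w‖
        = Real.pi / (‖Complex.sin ((Real.pi:ℂ) * w)‖
            * ‖Complex.Gamma (1 - w)‖) := by
      field_simp at habs ⊢
      linarith [habs]
    constructor
    · rw [hGw]
      rw [show Real.exp (Real.log Real.pi - Real.log (Real.cosh (Real.pi*τ)) - Ep u)
          = Real.pi / (Real.cosh (Real.pi*τ) * Real.exp (Ep u)) by
        rw [Real.exp_sub, Real.exp_sub, Real.exp_log Real.pi_pos,
          Real.exp_log (Real.cosh_pos _), div_div]]
      apply div_le_div_of_nonneg_left (le_of_lt Real.pi_pos)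
        (by positivity)
      exact mul_le_mul hsinw2 hG1w.2 (le_of_lt (lt_of_lt_of_le (Real.exp_pos _) hG1w.1))
        (le_of_lt (Real.cosh_pos _))
    · rw [hGw]
      rw [show Real.exp (Real.log Real.pi - Real.log cs - Fp u)
          = Real.pi / (cs * Real.exp (Fp u)) by
        rw [Real.exp_sub, Real.exp_sub, Real.exp_log Real.pi_pos, Real.exp_log hcs, div_div]]
      apply div_le_div_of_nonneg_left (le_of_lt Real.pi_pos) (by positivity)
      exact mul_le_mul hsinw1 hG1w.1 (le_of_lt (Real.exp_pos _)) (le_of_lt hsinpos)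
  · have h0 : Tendsto (fun u : ℝ => (Real.log Real.pi - Real.log cs)/u) atTop (𝓝 0) :=
      Tendsto.div_atTop tendsto_const_nhds tendsto_id
    have h := h0.add hFp.neg
    rw [zero_add] at h
    apply h.congr
    intro u
    ring
  · have h0 : Tendsto (fun u : ℝ => (Real.log Real.pi - Real.log (Real.cosh (Real.pi*τ)))/u)
        atTop (𝓝 0) := Tendsto.div_atTop tendsto_const_nhds tendsto_id
    have h := h0.add hEp.neg
    rw [zero_add] at h
    apply h.congr
    intro u
    ring

/-- Decay of the integrand underlying Theorem 3: if `p ≥ 1` and either `μ < 0`, or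
`μ = 0` and `|z| > v`, then `|φ(σ+it₀) z^{σ+it₀}| → 0` as `σ → -∞` along any
horizontal line avoiding the singularities. -/

theorem theorem3_decay (p q m n : ℕ) (hm : m ≤ q) (hn : n ≤ p) (hp : 1 ≤ p)
    (α A : Fin p → ℝ) (a : Fin p → ℂ) (β B : Fin q → ℝ) (b : Fin q → ℂ)
    (hα : ∀ j, 0 < α j) (hA : ∀ j, 0 < A j) (hβ : ∀ j, 0 < β j) (hB : ∀ j, 0 < B j)
    (z : ℂ) (hz : z ≠ 0)
    (hcase : mu p q α A β B < 0 ∨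
      (mu p q α A β B = 0 ∧ vconst p q α A β B < ‖z‖))
    (t₀ : ℝ)
    (ht₀ : ∀ σ : ℝ, ∀ k : ℕ,
      (∀ j : Fin q, (j : ℕ) < m →
        b j - (β j : ℂ) * ((σ : ℂ) + t₀ * Complex.I) ≠ -(k : ℂ)) ∧
      (∀ j : Fin p, (j : ℕ) < n →
        1 - a j + (α j : ℂ) * ((σ : ℂ) + t₀ * Complex.I) ≠ -(k : ℂ)) ∧
      (∀ j : Fin q, m ≤ (j : ℕ) →
        1 - b j + (β j : ℂ) * ((σ : ℂ) + t₀ * Complex.I) ≠ -(k : ℂ)) ∧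
      (∀ j : Fin p, n ≤ (j : ℕ) →
        a j - (α j : ℂ) * ((σ : ℂ) + t₀ * Complex.I) ≠ -(k : ℂ))) :
    Tendsto (fun σ : ℝ =>
        ‖phi p q m n α A a β B b ((σ : ℂ) + t₀ * Complex.I) *
          z ^ ((σ : ℂ) + t₀ * Complex.I)‖)
      atBot (nhds 0) := by
  -- it suffices to prove the statement along u = -σ → +∞
  suffices H : Tendsto (fun u : ℝ =>
      ‖phi p q m n α A a β B b (((-u : ℝ) : ℂ) + t₀ * Complex.I) *
        z ^ (((-u : ℝ) : ℂ) + t₀ * Complex.I)‖) atTop (𝓝 0) by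
    have h2 := H.comp tendsto_neg_atBot_atTop
    apply h2.congr
    intro σ
    simp [Function.comp]
  -- nonzero imaginary parts for the "minus side" Gamma factors
  have hτ2 : ∀ j : Fin p, (j : ℕ) < n → -(a j).im + α j * t₀ ≠ 0 := by
    intro j hj h0
    have h := (ht₀ (((a j).re - 1)/(α j)) 0).2.1 j hj
    apply h
    have hαj := (hα j).ne'
    rw [Complex.ext_iff]
    constructor
    · simp only [Complex.add_re, Complex.sub_re, Complex.one_re, Complex.mul_re,
        Complex.ofReal_re, Complex.ofReal_im, Complex.add_im, Complex.mul_im,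
        Complex.I_re, Complex.I_im, Complex.neg_re, Complex.natCast_re]
      field_simp
      simp
    · simp only [Complex.add_im, Complex.sub_im, Complex.one_im, Complex.mul_im,
        Complex.ofReal_re, Complex.ofReal_im, Complex.add_re, Complex.mul_re,
        Complex.I_re, Complex.I_im, Complex.neg_im, Complex.natCast_im]
      linarith
  have hτ3 : ∀ j : Fin q, m ≤ (j : ℕ) → -(b j).im + β j * t₀ ≠ 0 := by
    intro j hj h0
    have h := (ht₀ (((b j).re - 1)/(β j)) 0).2.2.1 j hj
    apply h
    have hβj := (hβ j).ne'
    rw [Complex.ext_iff]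
    constructor
    · simp only [Complex.add_re, Complex.sub_re, Complex.one_re, Complex.mul_re,
        Complex.ofReal_re, Complex.ofReal_im, Complex.add_im, Complex.mul_im,
        Complex.I_re, Complex.I_im, Complex.neg_re, Complex.natCast_re]
      field_simp
      simp
    · simp only [Complex.add_im, Complex.sub_im, Complex.one_im, Complex.mul_im,
        Complex.ofReal_re, Complex.ofReal_im, Complex.add_re, Complex.mul_re,
        Complex.I_re, Complex.I_im, Complex.neg_im, Complex.natCast_im]
      linarith
  -- choose per-factor exponent bounds
  have hpk1 : ∀ j : Fin q, ∃ E F : ℝ → ℝ,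
      (∀ᶠ u : ℝ in atTop,
        Real.exp (F u) ≤ ‖Complex.Gamma
          ((((b j).re + β j * u : ℝ) : ℂ) + (Complex.ofReal ((b j).im - β j * t₀))*Complex.I)‖ ∧
        ‖Complex.Gamma
          ((((b j).re + β j * u : ℝ) : ℂ) + (Complex.ofReal ((b j).im - β j * t₀))*Complex.I)‖ ≤ Real.exp (E u)) ∧
      Tendsto (fun u => E u / u - β j * Real.log u) atTop
        (𝓝 (β j * Real.log (β j) - β j)) ∧
      Tendsto (fun u => F u / u - β j * Real.log u) atTop
        (𝓝 (β j * Real.log (β j) - β j)) :=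
    fun j => aux_plus_pack ((b j).re) ((b j).im - β j * t₀) (β j) (hβ j)
  choose E1 F1 hb1 hE1 hF1 using hpk1
  have hpk4 : ∀ j : Fin p, ∃ E F : ℝ → ℝ,
      (∀ᶠ u : ℝ in atTop,
        Real.exp (F u) ≤ ‖Complex.Gamma
          ((((a j).re + α j * u : ℝ) : ℂ) + (Complex.ofReal ((a j).im - α j * t₀))*Complex.I)‖ ∧
        ‖Complex.Gamma
          ((((a j).re + α j * u : ℝ) : ℂ) + (Complex.ofReal ((a j).im - α j * t₀))*Complex.I)‖ ≤ Real.exp (E u)) ∧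
      Tendsto (fun u => E u / u - α j * Real.log u) atTop
        (𝓝 (α j * Real.log (α j) - α j)) ∧
      Tendsto (fun u => F u / u - α j * Real.log u) atTop
        (𝓝 (α j * Real.log (α j) - α j)) :=
    fun j => aux_plus_pack ((a j).re) ((a j).im - α j * t₀) (α j) (hα j)
  choose E4 F4 hb4 hE4 hF4 using hpk4
  have hpk2 : ∀ j : Fin p, ∃ E F : ℝ → ℝ, (j : ℕ) < n →
      (∀ᶠ u : ℝ in atTop,
        Real.exp (F u) ≤ ‖Complex.Gamma
          (((1 - (a j).re - α j * u : ℝ) : ℂ) + (Complex.ofReal (-(a j).im + α j * t₀))*Complex.I)‖ ∧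
        ‖Complex.Gamma
          (((1 - (a j).re - α j * u : ℝ) : ℂ) + (Complex.ofReal (-(a j).im + α j * t₀))*Complex.I)‖
            ≤ Real.exp (E u)) ∧
      Tendsto (fun u => E u / u + α j * Real.log u) atTop
        (𝓝 (-(α j * Real.log (α j) - α j))) ∧
      Tendsto (fun u => F u / u + α j * Real.log u) atTop
        (𝓝 (-(α j * Real.log (α j) - α j))) := by
    intro j
    by_cases hj : (j : ℕ) < n
    · obtain ⟨E, F, h⟩ := aux_minus_pack (1 - (a j).re) (-(a j).im + α j * t₀) (α j)
        (hα j) (hτ2 j hj)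
      exact ⟨E, F, fun _ => h⟩
    · exact ⟨0, 0, fun h => absurd h hj⟩
  choose E2 F2 hpk2' using hpk2
  have hpk3 : ∀ j : Fin q, ∃ E F : ℝ → ℝ, m ≤ (j : ℕ) →
      (∀ᶠ u : ℝ in atTop,
        Real.exp (F u) ≤ ‖Complex.Gamma
          (((1 - (b j).re - β j * u : ℝ) : ℂ) + (Complex.ofReal (-(b j).im + β j * t₀))*Complex.I)‖ ∧
        ‖Complex.Gamma
          (((1 - (b j).re - β j * u : ℝ) : ℂ) + (Complex.ofReal (-(b j).im + β j * t₀))*Complex.I)‖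
            ≤ Real.exp (E u)) ∧
      Tendsto (fun u => E u / u + β j * Real.log u) atTop
        (𝓝 (-(β j * Real.log (β j) - β j))) ∧
      Tendsto (fun u => F u / u + β j * Real.log u) atTop
        (𝓝 (-(β j * Real.log (β j) - β j))) := by
    intro j
    by_cases hj : m ≤ (j : ℕ)
    · obtain ⟨E, F, h⟩ := aux_minus_pack (1 - (b j).re) (-(b j).im + β j * t₀) (β j)
        (hβ j) (hτ3 j hj)
      exact ⟨E, F, fun _ => h⟩
    · exact ⟨0, 0, fun h => absurd h hj⟩
  choose E3 F3 hpk3' using hpk3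
  -- Gamma argument identities
  have harg1 : ∀ (j : Fin q) (u : ℝ), b j - (β j : ℂ) * (((-u : ℝ) : ℂ) + t₀ * Complex.I)
      = (((b j).re + β j * u : ℝ) : ℂ) + (Complex.ofReal ((b j).im - β j * t₀))*Complex.I := by
    intro j u
    apply Complex.ext <;> simp <;> ring
  have harg4 : ∀ (j : Fin p) (u : ℝ), a j - (α j : ℂ) * (((-u : ℝ) : ℂ) + t₀ * Complex.I)
      = (((a j).re + α j * u : ℝ) : ℂ) + (Complex.ofReal ((a j).im - α j * t₀))*Complex.I := by
    intro j u
    apply Complex.ext <;> simp <;> ring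
  have harg2 : ∀ (j : Fin p) (u : ℝ), 1 - a j + (α j : ℂ) * (((-u : ℝ) : ℂ) + t₀ * Complex.I)
      = ((1 - (a j).re - α j * u : ℝ) : ℂ) + (Complex.ofReal (-(a j).im + α j * t₀))*Complex.I := by
    intro j u
    apply Complex.ext <;> simp <;> ring
  have harg3 : ∀ (j : Fin q) (u : ℝ), 1 - b j + (β j : ℂ) * (((-u : ℝ) : ℂ) + t₀ * Complex.I)
      = ((1 - (b j).re - β j * u : ℝ) : ℂ) + (Complex.ofReal (-(b j).im + β j * t₀))*Complex.I := by
    intro j u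
    apply Complex.ext <;> simp <;> ring
  -- exponent sums
  set S1 : ℝ → ℝ := fun u => ∑ j ∈ univ.filter (fun j : Fin q => (j : ℕ) < m), B j * E1 j u
    with hS1
  set S2 : ℝ → ℝ := fun u => ∑ j ∈ univ.filter (fun j : Fin p => (j : ℕ) < n), A j * E2 j u
    with hS2
  set S3 : ℝ → ℝ := fun u => ∑ j ∈ univ.filter (fun j : Fin q => m ≤ (j : ℕ)), B j * F3 j u
    with hS3
  set S4 : ℝ → ℝ := fun u => ∑ j ∈ univ.filter (fun j : Fin p => n ≤ (j : ℕ)), A j * F4 j u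
    with hS4
  set T : ℝ → ℝ := fun u => S1 u + S2 u - S3 u - S4 u
    + ((-u) * Real.log (‖z‖) - Complex.arg z * t₀) with hTdef
  -- eventual bounds per group
  have ev1 : ∀ᶠ u : ℝ in atTop, ∀ j : Fin q,
      ‖Complex.Gamma
        ((((b j).re + β j * u : ℝ) : ℂ) + (Complex.ofReal ((b j).im - β j * t₀))*Complex.I)‖
        ≤ Real.exp (E1 j u) :=
    eventually_all.mpr fun j => (hb1 j).mono fun u h => h.2
  have ev4 : ∀ᶠ u : ℝ in atTop, ∀ j : Fin p,
      Real.exp (F4 j u) ≤ ‖Complex.Gamma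
        ((((a j).re + α j * u : ℝ) : ℂ) + (Complex.ofReal ((a j).im - α j * t₀))*Complex.I)‖ :=
    eventually_all.mpr fun j => (hb4 j).mono fun u h => h.1
  have ev2 : ∀ᶠ u : ℝ in atTop, ∀ j : Fin p, (j : ℕ) < n →
      ‖Complex.Gamma
        (((1 - (a j).re - α j * u : ℝ) : ℂ) + (Complex.ofReal (-(a j).im + α j * t₀))*Complex.I)‖
        ≤ Real.exp (E2 j u) := by
    apply eventually_all.mpr
    intro j
    by_cases hj : (j : ℕ) < n
    · exact ((hpk2' j hj).1).mono fun u h _ => h.2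
    · exact Eventually.of_forall fun u h => absurd h hj
  have ev3 : ∀ᶠ u : ℝ in atTop, ∀ j : Fin q, m ≤ (j : ℕ) →
      Real.exp (F3 j u) ≤ ‖Complex.Gamma
        (((1 - (b j).re - β j * u : ℝ) : ℂ) + (Complex.ofReal (-(b j).im + β j * t₀))*Complex.I)‖ := by
    apply eventually_all.mpr
    intro j
    by_cases hj : m ≤ (j : ℕ)
    · exact ((hpk3' j hj).1).mono fun u h _ => h.1
    · exact Eventually.of_forall fun u h => absurd h hj
  -- the global eventual bound
  have hbound : ∀ᶠ u : ℝ in atTop,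
      ‖phi p q m n α A a β B b (((-u : ℝ) : ℂ) + t₀ * Complex.I) *
        z ^ (((-u : ℝ) : ℂ) + t₀ * Complex.I)‖ ≤ Real.exp (T u) := by
    filter_upwards [ev1, ev2, ev3, ev4] with u h1 h2 h3 h4
    have habsz : 0 < ‖z‖ := norm_pos_iff.mpr hz
    have hzpow : ‖z ^ (((-u : ℝ) : ℂ) + t₀ * Complex.I)‖
        = Real.exp ((-u) * Real.log (‖z‖) - Complex.arg z * t₀) := by
      rw [Complex.norm_cpow_of_ne_zero hz]
      have hre : (((-u : ℝ) : ℂ) + t₀ * Complex.I).re = -u := by simp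
      have him : (((-u : ℝ) : ℂ) + t₀ * Complex.I).im = t₀ := by simp
      rw [hre, him, Real.rpow_def_of_pos habsz, ← Real.exp_sub]
      congr 1
      ring
    have e1 : ∏ j ∈ univ.filter (fun j : Fin q => (j : ℕ) < m),
        ‖Complex.Gamma (b j - (β j : ℂ) * (((-u : ℝ) : ℂ) + t₀ * Complex.I))
          ^ ((B j : ℝ) : ℂ)‖ ≤ Real.exp (S1 u) := by
      rw [hS1, Real.exp_sum]
      apply Finset.prod_le_prod (fun j _ => norm_nonneg _)
      intro j hj
      rw [aux_abs_cpow_real _ _ (hB j).ne', harg1 j u, mul_comm (B j), Real.exp_mul]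
      exact Real.rpow_le_rpow (norm_nonneg _) (h1 j) (le_of_lt (hB j))
    have e2 : ∏ j ∈ univ.filter (fun j : Fin p => (j : ℕ) < n),
        ‖Complex.Gamma (1 - a j + (α j : ℂ) * (((-u : ℝ) : ℂ) + t₀ * Complex.I))
          ^ ((A j : ℝ) : ℂ)‖ ≤ Real.exp (S2 u) := by
      rw [hS2, Real.exp_sum]
      apply Finset.prod_le_prod (fun j _ => norm_nonneg _)
      intro j hj
      rw [aux_abs_cpow_real _ _ (hA j).ne', harg2 j u, mul_comm (A j), Real.exp_mul]
      exact Real.rpow_le_rpow (norm_nonneg _)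
        (h2 j (by simpa using (Finset.mem_filter.mp hj).2)) (le_of_lt (hA j))
    have e3 : Real.exp (S3 u) ≤ ∏ j ∈ univ.filter (fun j : Fin q => m ≤ (j : ℕ)),
        ‖Complex.Gamma (1 - b j + (β j : ℂ) * (((-u : ℝ) : ℂ) + t₀ * Complex.I))
          ^ ((B j : ℝ) : ℂ)‖ := by
      rw [hS3, Real.exp_sum]
      apply Finset.prod_le_prod (fun j _ => (Real.exp_pos _).le)
      intro j hj
      rw [aux_abs_cpow_real _ _ (hB j).ne', harg3 j u, mul_comm (B j), Real.exp_mul]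
      exact Real.rpow_le_rpow (Real.exp_pos _).le
        (h3 j (by simpa using (Finset.mem_filter.mp hj).2)) (le_of_lt (hB j))
    have e4 : Real.exp (S4 u) ≤ ∏ j ∈ univ.filter (fun j : Fin p => n ≤ (j : ℕ)),
        ‖Complex.Gamma (a j - (α j : ℂ) * (((-u : ℝ) : ℂ) + t₀ * Complex.I))
          ^ ((A j : ℝ) : ℂ)‖ := by
      rw [hS4, Real.exp_sum]
      apply Finset.prod_le_prod (fun j _ => (Real.exp_pos _).le)
      intro j hj
      rw [aux_abs_cpow_real _ _ (hA j).ne', harg4 j u, mul_comm (A j), Real.exp_mul]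
      exact Real.rpow_le_rpow (Real.exp_pos _).le (h4 j) (le_of_lt (hA j))
    rw [norm_mul, hzpow]
    have hphi : ‖phi p q m n α A a β B b (((-u : ℝ) : ℂ) + t₀ * Complex.I)‖
        ≤ Real.exp (S1 u + S2 u - S3 u - S4 u) := by
      unfold phi
      rw [norm_div, norm_mul, norm_mul, norm_prod, norm_prod, norm_prod, norm_prod]
      calc _ ≤ (Real.exp (S1 u) * Real.exp (S2 u)) / (Real.exp (S3 u) * Real.exp (S4 u)) := by
            apply div_le_div₀ (by positivity)
              (mul_le_mul e1 e2 (Finset.prod_nonneg fun j _ => norm_nonneg _)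
                (Real.exp_pos _).le)
              (by positivity)
              (mul_le_mul e3 e4 (Real.exp_pos _).le
                (Finset.prod_nonneg fun j _ => norm_nonneg _))
        _ = Real.exp (S1 u + S2 u - S3 u - S4 u) := by
            rw [← Real.exp_add, ← Real.exp_add, ← Real.exp_sub]
            congr 1
            ring
    calc ‖phi p q m n α A a β B b (((-u : ℝ) : ℂ) + t₀ * Complex.I)‖ *
          Real.exp ((-u) * Real.log (‖z‖) - Complex.arg z * t₀)
        ≤ Real.exp (S1 u + S2 u - S3 u - S4 u) *
          Real.exp ((-u) * Real.log (‖z‖) - Complex.arg z * t₀) :=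
          mul_le_mul_of_nonneg_right hphi (Real.exp_pos _).le
      _ = Real.exp (T u) := by rw [← Real.exp_add]
  -- per-group limits
  have hG1 : Tendsto (fun u => S1 u / u
      - (∑ j ∈ univ.filter (fun j : Fin q => (j : ℕ) < m), B j * β j) * Real.log u) atTop
      (𝓝 (∑ j ∈ univ.filter (fun j : Fin q => (j : ℕ) < m),
        B j * (β j * Real.log (β j) - β j))) := by
    have h := tendsto_finset_sum (univ.filter (fun j : Fin q => (j : ℕ) < m))
      (fun j (_ : j ∈ _) => (hE1 j).const_mul (B j))
    apply h.congr
    intro u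
    rw [hS1, Finset.sum_div, Finset.sum_mul, ← Finset.sum_sub_distrib]
    exact Finset.sum_congr rfl fun j _ => by ring
  have hG2 : Tendsto (fun u => S2 u / u
      + (∑ j ∈ univ.filter (fun j : Fin p => (j : ℕ) < n), A j * α j) * Real.log u) atTop
      (𝓝 (∑ j ∈ univ.filter (fun j : Fin p => (j : ℕ) < n),
        A j * (-(α j * Real.log (α j) - α j)))) := by
    have h := tendsto_finset_sum (univ.filter (fun j : Fin p => (j : ℕ) < n))
      (fun j hj => ((hpk2' j (by simpa using (Finset.mem_filter.mp hj).2)).2.1).const_mul (A j))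
    apply h.congr
    intro u
    rw [hS2, Finset.sum_div, Finset.sum_mul, ← Finset.sum_add_distrib]
    exact Finset.sum_congr rfl fun j _ => by ring
  have hG3 : Tendsto (fun u => S3 u / u
      + (∑ j ∈ univ.filter (fun j : Fin q => m ≤ (j : ℕ)), B j * β j) * Real.log u) atTop
      (𝓝 (∑ j ∈ univ.filter (fun j : Fin q => m ≤ (j : ℕ)),
        B j * (-(β j * Real.log (β j) - β j)))) := by
    have h := tendsto_finset_sum (univ.filter (fun j : Fin q => m ≤ (j : ℕ)))
      (fun j hj => ((hpk3' j (by simpa using (Finset.mem_filter.mp hj).2)).2.2).const_mul (B j))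
    apply h.congr
    intro u
    rw [hS3, Finset.sum_div, Finset.sum_mul, ← Finset.sum_add_distrib]
    exact Finset.sum_congr rfl fun j _ => by ring
  have hG4 : Tendsto (fun u => S4 u / u
      - (∑ j ∈ univ.filter (fun j : Fin p => n ≤ (j : ℕ)), A j * α j) * Real.log u) atTop
      (𝓝 (∑ j ∈ univ.filter (fun j : Fin p => n ≤ (j : ℕ)),
        A j * (α j * Real.log (α j) - α j))) := by
    have h := tendsto_finset_sum (univ.filter (fun j : Fin p => n ≤ (j : ℕ)))
      (fun j (_ : j ∈ _) => (hF4 j).const_mul (A j))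
    apply h.congr
    intro u
    rw [hS4, Finset.sum_div, Finset.sum_mul, ← Finset.sum_sub_distrib]
    exact Finset.sum_congr rfl fun j _ => by ring
  -- filter splitting identities
  have hf3eq : univ.filter (fun j : Fin q => m ≤ (j : ℕ))
      = univ.filter (fun j : Fin q => ¬ (j : ℕ) < m) :=
    Finset.filter_congr fun j _ => by simp [not_lt]
  have hf4eq : univ.filter (fun j : Fin p => n ≤ (j : ℕ))
      = univ.filter (fun j : Fin p => ¬ (j : ℕ) < n) :=
    Finset.filter_congr fun j _ => by simp [not_lt]
  have hsplitq : ∀ g : Fin q → ℝ,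
      (∑ j ∈ univ.filter (fun j : Fin q => (j : ℕ) < m), g j)
        + (∑ j ∈ univ.filter (fun j : Fin q => m ≤ (j : ℕ)), g j) = ∑ j, g j := by
    intro g
    rw [hf3eq]
    exact Finset.sum_filter_add_sum_filter_not univ _ g
  have hsplitp : ∀ g : Fin p → ℝ,
      (∑ j ∈ univ.filter (fun j : Fin p => (j : ℕ) < n), g j)
        + (∑ j ∈ univ.filter (fun j : Fin p => n ≤ (j : ℕ)), g j) = ∑ j, g j := by
    intro g
    rw [hf4eq]
    exact Finset.sum_filter_add_sum_filter_not univ _ g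
  have hμeq : mu p q α A β B
      = (∑ j ∈ univ.filter (fun j : Fin q => (j : ℕ) < m), B j * β j)
        - (∑ j ∈ univ.filter (fun j : Fin p => (j : ℕ) < n), A j * α j)
        + (∑ j ∈ univ.filter (fun j : Fin q => m ≤ (j : ℕ)), B j * β j)
        - (∑ j ∈ univ.filter (fun j : Fin p => n ≤ (j : ℕ)), A j * α j) := by
    unfold mu
    rw [← hsplitq (fun j => B j * β j), ← hsplitp (fun j => A j * α j)]
    ring
  -- the combined limit constant
  set K₀ : ℝ := (∑ j ∈ univ.filter (fun j : Fin q => (j : ℕ) < m),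
        B j * (β j * Real.log (β j) - β j))
      + (∑ j ∈ univ.filter (fun j : Fin p => (j : ℕ) < n),
        A j * (-(α j * Real.log (α j) - α j)))
      - (∑ j ∈ univ.filter (fun j : Fin q => m ≤ (j : ℕ)),
        B j * (-(β j * Real.log (β j) - β j)))
      - (∑ j ∈ univ.filter (fun j : Fin p => n ≤ (j : ℕ)),
        A j * (α j * Real.log (α j) - α j))
      + (- Real.log (‖z‖)) with hK₀def
  have hTlim : Tendsto (fun u => T u / u - mu p q α A β B * Real.log u) atTop (𝓝 K₀) := by
    have hc : Tendsto (fun _ : ℝ => - Real.log (‖z‖)) atTop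
        (𝓝 (- Real.log (‖z‖))) := tendsto_const_nhds
    have hd : Tendsto (fun u : ℝ => (- (Complex.arg z * t₀)) / u) atTop (𝓝 0) :=
      Tendsto.div_atTop tendsto_const_nhds tendsto_id
    have h := ((((hG1.add hG2).sub hG3).sub hG4).add hc).add hd
    rw [add_zero] at h
    apply h.congr'
    filter_upwards [eventually_gt_atTop 0] with u hu
    rw [hμeq, hTdef]
    field_simp
    ring
  -- identify the constant with log v - mu - log |z|
  have hlogv : Real.log (vconst p q α A β B)
      = (∑ j, B j * β j * Real.log (β j)) - (∑ j, A j * α j * Real.log (α j)) := by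
    unfold vconst
    rw [Real.log_div
        (Finset.prod_pos fun j _ => Real.rpow_pos_of_pos (hβ j) _).ne'
        (Finset.prod_pos fun j _ => Real.rpow_pos_of_pos (hα j) _).ne',
      Real.log_prod (fun j _ => (Real.rpow_pos_of_pos (hβ j) _).ne'),
      Real.log_prod (fun j _ => (Real.rpow_pos_of_pos (hα j) _).ne')]
    congr 1
    · exact Finset.sum_congr rfl fun j _ => by rw [Real.log_rpow (hβ j)]
    · exact Finset.sum_congr rfl fun j _ => by rw [Real.log_rpow (hα j)]
  have d1 : ∑ j ∈ univ.filter (fun j : Fin q => (j : ℕ) < m),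
      B j * (β j * Real.log (β j) - β j)
      = (∑ j ∈ univ.filter (fun j : Fin q => (j : ℕ) < m), B j * β j * Real.log (β j))
        - (∑ j ∈ univ.filter (fun j : Fin q => (j : ℕ) < m), B j * β j) := by
    rw [← Finset.sum_sub_distrib]
    exact Finset.sum_congr rfl fun j _ => by ring
  have d3 : ∑ j ∈ univ.filter (fun j : Fin q => m ≤ (j : ℕ)),
      B j * (-(β j * Real.log (β j) - β j))
      = (∑ j ∈ univ.filter (fun j : Fin q => m ≤ (j : ℕ)), B j * β j)
        - (∑ j ∈ univ.filter (fun j : Fin q => m ≤ (j : ℕ)), B j * β j * Real.log (β j)) := by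
    rw [← Finset.sum_sub_distrib]
    exact Finset.sum_congr rfl fun j _ => by ring
  have d2 : ∑ j ∈ univ.filter (fun j : Fin p => (j : ℕ) < n),
      A j * (-(α j * Real.log (α j) - α j))
      = (∑ j ∈ univ.filter (fun j : Fin p => (j : ℕ) < n), A j * α j)
        - (∑ j ∈ univ.filter (fun j : Fin p => (j : ℕ) < n), A j * α j * Real.log (α j)) := by
    rw [← Finset.sum_sub_distrib]
    exact Finset.sum_congr rfl fun j _ => by ring
  have d4 : ∑ j ∈ univ.filter (fun j : Fin p => n ≤ (j : ℕ)),
      A j * (α j * Real.log (α j) - α j)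
      = (∑ j ∈ univ.filter (fun j : Fin p => n ≤ (j : ℕ)), A j * α j * Real.log (α j))
        - (∑ j ∈ univ.filter (fun j : Fin p => n ≤ (j : ℕ)), A j * α j) := by
    rw [← Finset.sum_sub_distrib]
    exact Finset.sum_congr rfl fun j _ => by ring
  have hK0eq : K₀ = Real.log (vconst p q α A β B) - mu p q α A β B
      - Real.log (‖z‖) := by
    have e1 := hsplitq (fun j => B j * β j * Real.log (β j))
    have e2 := hsplitq (fun j => B j * β j)
    have e3 := hsplitp (fun j => A j * α j * Real.log (α j))
    have e4 := hsplitp (fun j => A j * α j)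
    rw [hK₀def, hlogv, d1, d2, d3, d4]
    unfold mu
    linarith
  -- in both cases, T u / u is eventually ≤ -ε
  obtain ⟨ε, hεpos, hevT⟩ : ∃ ε : ℝ, 0 < ε ∧ ∀ᶠ u : ℝ in atTop, T u / u ≤ -ε := by
    rcases hcase with hneg | ⟨hzero, hv⟩
    · have hlogb : Tendsto (fun u : ℝ => mu p q α A β B * Real.log u) atTop atBot :=
        Real.tendsto_log_atTop.const_mul_atTop_of_neg hneg
      have hdiv : Tendsto (fun u => T u / u) atTop atBot := by
        have h := hTlim.add_atBot hlogb
        apply h.congr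
        intro u
        ring
      exact ⟨1, one_pos, hdiv.eventually (eventually_le_atBot (-1))⟩
    · have hvpos : 0 < vconst p q α A β B := by
        unfold vconst
        exact div_pos (Finset.prod_pos fun j _ => Real.rpow_pos_of_pos (hβ j) _)
          (Finset.prod_pos fun j _ => Real.rpow_pos_of_pos (hα j) _)
      have hKneg : K₀ < 0 := by
        rw [hK0eq, hzero]
        have := Real.log_lt_log hvpos hv
        linarith
      have hdiv : Tendsto (fun u => T u / u) atTop (𝓝 K₀) := by
        have h := hTlim
        rw [hzero] at h
        simp only [zero_mul, sub_zero] at h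
        exact h
      refine ⟨-K₀/2, by linarith, ?_⟩
      exact (hdiv.eventually_lt_const (by linarith : K₀ < -(-K₀/2))).mono
        fun u h => le_of_lt h
  have hTbot : Tendsto T atTop atBot := by
    have hlin : Tendsto (fun u : ℝ => -(ε * u)) atTop atBot :=
      tendsto_neg_atTop_atBot.comp (tendsto_id.const_mul_atTop hεpos)
    apply tendsto_atBot_mono' atTop _ hlin
    filter_upwards [hevT, eventually_gt_atTop 0] with u h hu
    have h2 := mul_le_mul_of_nonneg_right h (le_of_lt hu)
    rw [div_mul_cancel₀ _ hu.ne'] at h2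
    calc T u ≤ -ε * u := h2
      _ = -(ε * u) := by ring
  exact squeeze_zero' (Eventually.of_forall fun u => norm_nonneg _) hbound
    (Real.tendsto_exp_atBot.comp hTbot)
end

section
/- (Property (7.4): argument rescaling.) Let c > 0 be real and let z be a nonzero complex number with |Arg z| < π/c (so that (z^c)^s = z^{cs} for every complex s). Let σ be admissible with t ↦ φ(σ+it)·z^{σ+it} integrable on ℝ. Let φ_c be the function built in the same way as φ but with α_j replaced by c·α_j (1 ≤ j ≤ p) and β_j replaced by c·β_j (1 ≤ j ≤ q), the a_j, b_j, A_j, B_j unchanged (so φ_c(s) = φ(c s)). Then (2π)^{−1} ∫_ℝ φ(σ+it)·z^{σ+it} dt = c · (2π)^{−1} ∫_ℝ φ_c(σ/c + it)·(z^c)^{σ/c + it} dt. -/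
open Complex Finset Filter MeasureTheory Real

lemma phi_scale (p q m n : ℕ) (α A : Fin p → ℝ) (a : Fin p → ℂ)
    (β B : Fin q → ℝ) (b : Fin q → ℂ) (c : ℝ) (s : ℂ) :
    phi p q m n (fun j => c * α j) A a (fun j => c * β j) B b s =
      phi p q m n α A a β B b ((c : ℂ) * s) := by
  simp only [phi]
  congr 1
  · congr 1 <;>
    · refine Finset.prod_congr rfl fun j _ => ?_
      congr 2
      push_cast; ring
  · congr 1 <;>
    · refine Finset.prod_congr rfl fun j _ => ?_
      congr 2
      push_cast; ring

/-- Property (7.4): argument rescaling. For `c > 0` with `|Arg z| < π/c`,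
the I-function with parameters `(a_j, α_j, A_j), (b_j, β_j, B_j)` at `z` equals
`c` times the I-function with parameters `(a_j, cα_j, A_j), (b_j, cβ_j, B_j)`
at `z^c`, along the rescaled contour. -/
theorem property_7_4 (p q m n : ℕ) (hm : m ≤ q) (hn : n ≤ p)
    (α A : Fin p → ℝ) (a : Fin p → ℂ) (β B : Fin q → ℝ) (b : Fin q → ℂ)
    (hα : ∀ j, 0 < α j) (hA : ∀ j, 0 < A j) (hβ : ∀ j, 0 < β j) (hB : ∀ j, 0 < B j)
    (c : ℝ) (hc : 0 < c) (z : ℂ) (hz : z ≠ 0) (harg : |z.arg| < π / c)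
    (σ : ℝ) (hσ : Admissible p q m n α a β b σ)
    (hint : Integrable (fun t : ℝ =>
      phi p q m n α A a β B b ((σ : ℂ) + t * Complex.I) *
        z ^ ((σ : ℂ) + t * Complex.I))) :
    (2 * (π : ℂ))⁻¹ * (∫ t : ℝ,
        phi p q m n α A a β B b ((σ : ℂ) + t * Complex.I) *
          z ^ ((σ : ℂ) + t * Complex.I)) =
      (c : ℂ) * ((2 * (π : ℂ))⁻¹ * ∫ t : ℝ,
        phi p q m n (fun j => c * α j) A a (fun j => c * β j) B b
            (((σ / c : ℝ) : ℂ) + t * Complex.I) *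
          (z ^ (c : ℂ)) ^ (((σ / c : ℝ) : ℂ) + t * Complex.I)) := by
  have hc' : c ≠ 0 := hc.ne'
  have key : ∀ t : ℝ,
      phi p q m n (fun j => c * α j) A a (fun j => c * β j) B b
          (((σ / c : ℝ) : ℂ) + t * Complex.I) *
        (z ^ (c : ℂ)) ^ (((σ / c : ℝ) : ℂ) + t * Complex.I) =
      phi p q m n α A a β B b ((σ : ℂ) + (c * t : ℝ) * Complex.I) *
        z ^ ((σ : ℂ) + (c * t : ℝ) * Complex.I) := by
    intro t
    have hs : (c : ℂ) * (((σ / c : ℝ) : ℂ) + t * Complex.I)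
        = (σ : ℂ) + (c * t : ℝ) * Complex.I := by
      have hcc : (c : ℂ) ≠ 0 := by exact_mod_cast hc'
      push_cast
      field_simp
    have him : (Complex.log z * (c : ℂ)).im = z.arg * c := by
      simp [Complex.mul_im, Complex.log_im]
    have habs : |z.arg * c| < π := by
      rw [abs_mul, abs_of_pos hc]
      calc |z.arg| * c < (π / c) * c := by
            exact mul_lt_mul_of_pos_right harg hc
        _ = π := by field_simp
    rw [phi_scale, hs, ← Complex.cpow_mul]
    · rw [hs]
    · rw [him]; linarith [abs_lt.mp habs]
    · rw [him]; linarith [abs_lt.mp habs]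
  simp_rw [key]
  rw [MeasureTheory.Measure.integral_comp_mul_left
    (fun u : ℝ => phi p q m n α A a β B b ((σ : ℂ) + (u : ℝ) * Complex.I) *
        z ^ ((σ : ℂ) + (u : ℝ) * Complex.I)) c]
  rw [Complex.real_smul, abs_of_pos (inv_pos.mpr hc)]
  push_cast
  have : (c : ℂ) ≠ 0 := by exact_mod_cast hc'
  field_simp
  simp_rw [mul_comm I]
end
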